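/- Suppose γ(t) = exp(x(t)e₁ + y(t)e₂ + z(t)e₃) solves the magnetic system x'' + (x + z₀ + ρ)(y' + 1) = ρ, y'' - (x + z₀ + ρ)x' = 0, z' + (1/2)(x'y - x(y'+2)) = z₀ with x(0)=y(0)=z(0)=0, x'(0)=x₀, y'(0)=y₀, z'(0)=z₀. Then y'(t) = x(t)²/2 + (z₀+ρ)x(t) + y₀ for all t, and x satisfies the single ODE x'' + (x + z₀+ρ)(x²/2 + (z₀+ρ)x + y₀ + 1) = ρ. -/

import Mathlib

/- A solution of the magnetic system on H₃ for F_{e₁,ρ} satisfies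
   y'(t) = x(t)²/2 + (z₀+ρ)x(t) + y₀ and x solves the single ODE
   x'' + (x + z₀+ρ)(x²/2 + (z₀+ρ)x + y₀ + 1) = ρ. -/
theorem stmt_14 (x₀ y₀ z₀ ρ : ℝ) (x y z : ℝ → ℝ)
    (hx : ContDiff ℝ 2 x) (hy : ContDiff ℝ 2 y) (hz : ContDiff ℝ 1 z)
    (hx0 : x 0 = 0) (hy0 : y 0 = 0) (hz0 : z 0 = 0)
    (hx0' : deriv x 0 = x₀) (hy0' : deriv y 0 = y₀) (hz0' : deriv z 0 = z₀)
    (heq1 : ∀ t, deriv (deriv x) t + (x t + z₀ + ρ) * (deriv y t + 1) = ρ)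
    (heq2 : ∀ t, deriv (deriv y) t - (x t + z₀ + ρ) * deriv x t = 0)
    (heq3 : ∀ t, deriv z t + (1 / 2) * (deriv x t * y t - x t * (deriv y t + 2)) = z₀) :
    (∀ t, deriv y t = (x t) ^ 2 / 2 + (z₀ + ρ) * x t + y₀) ∧
    (∀ t, deriv (deriv x) t
      + (x t + z₀ + ρ) * ((x t) ^ 2 / 2 + (z₀ + ρ) * x t + y₀ + 1) = ρ) := by
  have hxd : Differentiable ℝ x := hx.differentiable (by norm_num)
  have hydC : ContDiff ℝ 1 (deriv y) := by
    have := (contDiff_succ_iff_deriv (n := 1)).mp (by exact_mod_cast hy)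
    exact this.2.2
  have hyd' : Differentiable ℝ (deriv y) := hydC.differentiable (by norm_num)
  set g : ℝ → ℝ := fun t => deriv y t - ((x t) ^ 2 / 2 + (z₀ + ρ) * x t + y₀) with hg
  have hgd : Differentiable ℝ g := by
    apply hyd'.sub
    fun_prop
  have hg' : ∀ t, deriv g t = 0 := by
    intro t
    have h1 : HasDerivAt (fun t => (x t) ^ 2 / 2 + (z₀ + ρ) * x t + y₀)
        (x t * deriv x t + (z₀ + ρ) * deriv x t) t := by
      have hxt := (hxd t).hasDerivAt
      have := (((hxt.pow 2).div_const 2).add ((hxt.const_mul (z₀ + ρ)))).add_const y₀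
      refine this.congr_deriv ?_
      ring
    have h2 : HasDerivAt g (deriv (deriv y) t - (x t * deriv x t + (z₀ + ρ) * deriv x t)) t :=
      (hyd' t).hasDerivAt.sub h1
    rw [h2.deriv]
    have := heq2 t
    nlinarith [this]
  have hconst : ∀ t, g t = g 0 := by
    intro t
    exact is_const_of_deriv_eq_zero hgd hg' t 0
  have hg0 : g 0 = 0 := by
    simp [hg, hx0, hy0']
  have key : ∀ t, deriv y t = (x t) ^ 2 / 2 + (z₀ + ρ) * x t + y₀ := by
    intro t
    have := hconst t
    rw [hg0] at this
    simpa [hg, sub_eq_zero] using this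
  refine ⟨key, fun t => ?_⟩
  have := heq1 t
  rw [key t] at this
  linarith
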